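/- Let n ≥ 1, λ ∈ (0,n), and let μ be a Borel probability measure on ℝ^n whose support has diameter strictly greater than 1. Then for every sequence of positive reals α_k → ∞ and every sequence of Borel probability measures μ_k converging weakly to μ, one has E_{α_k,λ}(μ_k) → ∞. -/
import Mathlib


open MeasureTheory Filter ENNReal Metric Topology

noncomputable section

/-- `ℝ^n` with the Euclidean metric. -/
abbrev Euc (n : ℕ) := EuclideanSpace ℝ (Fin n)

/-- The support of a Borel measure: the smallest closed set of full measure,
described as the set of points all of whose neighborhoods have positive measure. -/
def msupport {n : ℕ} (μ : Measure (Euc n)) : Set (Euc n) :=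
  {x | ∀ U : Set (Euc n), IsOpen U → x ∈ U → 0 < μ U}

/-- The repulsive (Riesz) energy `∬ |x-y|^(-λ) dμ dμ`, valued in `[0,∞]`. -/
def rieszEnergy (n : ℕ) (lam : ℝ) (μ : Measure (Euc n)) : ℝ≥0∞ :=
  ∫⁻ x, ∫⁻ y, edist x y ^ (-lam) ∂μ ∂μ

/-- The attractive–repulsive energy `E_{α,λ}(μ) = ∬ (|x-y|^α + |x-y|^(-λ)) dμ dμ`. -/
def energy (n : ℕ) (a lam : ℝ) (μ : Measure (Euc n)) : ℝ≥0∞ :=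
  ∫⁻ x, ∫⁻ y, (edist x y ^ a + edist x y ^ (-lam)) ∂μ ∂μ

/-- if the support of `μ` has diameter `> 1`, then for any `α_k → ∞`
and any `μ_k ⇀ μ` weakly, `E_{α_k,λ}(μ_k) → ∞`. -/
theorem stmt1 (n : ℕ) (hn : 1 ≤ n) (lam : ℝ) (hlam0 : 0 < lam) (hlamn : lam < n)
    (μ : Measure (Euc n)) (hμ : IsProbabilityMeasure μ)
    (hdiam : 1 < EMetric.diam (msupport μ))
    (a : ℕ → ℝ) (ha : ∀ k, 0 < a k) (hatop : Tendsto a atTop atTop)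
    (μs : ℕ → Measure (Euc n)) (hμs : ∀ k, IsProbabilityMeasure (μs k))
    (hconv : ∀ φ : BoundedContinuousFunction (Euc n) ℝ,
      Tendsto (fun k => ∫ x, φ x ∂(μs k)) atTop (𝓝 (∫ x, φ x ∂μ))) :
    Tendsto (fun k => energy n (a k) lam (μs k)) atTop (𝓝 ⊤) := by
  -- pick a threshold t with 1 < t < diam
  obtain ⟨t, ht1, htd⟩ := exists_between hdiam
  -- find two support points at distance > t
  have hxy : ∃ x ∈ msupport μ, ∃ y ∈ msupport μ, t < edist x y := by
    by_contra h
    push_neg at h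
    exact absurd (EMetric.diam_le fun x hx y hy => h x hx y hy) (not_le.mpr htd)
  obtain ⟨x, hx, y, hy, hd⟩ := hxy
  set d := edist x y with hdd
  have htne : t ≠ ⊤ := (lt_of_lt_of_le hd le_top).ne
  -- radius
  set r : ℝ≥0∞ := min 1 ((d - t) / 2) with hr
  have hr0 : 0 < r := by
    refine lt_min one_pos ?_
    exact ENNReal.div_pos (tsub_pos_of_lt hd).ne' (by norm_num)
  have h2r : 2 * r ≠ ⊤ := by
    have : r ≤ 1 := min_le_left _ _
    exact (lt_of_le_of_lt (mul_le_mul_right this 2) (by norm_num)).ne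
  -- separation of the two balls
  set A := EMetric.ball x r with hA
  set B := EMetric.ball y r with hB
  have hsep : ∀ u ∈ A, ∀ v ∈ B, t ≤ edist u v := by
    intro u hu v hv
    have h1 : d ≤ edist u v + 2 * r := by
      calc d ≤ edist x u + edist u v + edist v y := edist_triangle4 x u v y
        _ ≤ r + edist u v + r := by
            gcongr
            · exact (EMetric.mem_ball'.mp hu).le
            · exact (EMetric.mem_ball.mp hv).le
        _ = edist u v + 2 * r := by ring
    have h2 : t + 2 * r ≤ d := by
      have hrle : r ≤ (d - t) / 2 := min_le_right _ _
      have : 2 * r ≤ d - t := by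
        calc 2 * r ≤ 2 * ((d - t) / 2) := by gcongr
          _ ≤ d - t := ENNReal.mul_div_le
      calc t + 2 * r ≤ t + (d - t) := by gcongr
        _ = d := add_tsub_cancel_of_le hd.le
    have := h2.trans h1
    exact (ENNReal.add_le_add_iff_right h2r).mp this
  -- positive measures of the balls
  have hμA : 0 < μ A := hx A EMetric.isOpen_ball (EMetric.mem_ball_self hr0)
  have hμB : 0 < μ B := hy B EMetric.isOpen_ball (EMetric.mem_ball_self hr0)
  have hμAt : μ A ≠ ⊤ := (measure_lt_top μ A).ne
  have hμBt : μ B ≠ ⊤ := (measure_lt_top μ B).ne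
  set cA := μ A / 2 with hcA
  set cB := μ B / 2 with hcB
  have hcA0 : cA ≠ 0 := by
    simp only [hcA, ne_eq, ENNReal.div_eq_zero_iff]
    push_neg
    exact ⟨hμA.ne', by norm_num⟩
  have hcB0 : cB ≠ 0 := by
    simp only [hcB, ne_eq, ENNReal.div_eq_zero_iff]
    push_neg
    exact ⟨hμB.ne', by norm_num⟩
  have hcAt : cA ≠ ⊤ := by
    simp only [hcA]
    exact (ENNReal.div_lt_top hμAt (by norm_num)).ne
  have hcBt : cB ≠ ⊤ := by
    simp only [hcB]
    exact (ENNReal.div_lt_top hμBt (by norm_num)).ne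
  -- weak convergence via probability measures
  let P : ℕ → ProbabilityMeasure (Euc n) := fun k => ⟨μs k, hμs k⟩
  let Q : ProbabilityMeasure (Euc n) := ⟨μ, hμ⟩
  have hP : Tendsto P atTop (𝓝 Q) :=
    ProbabilityMeasure.tendsto_iff_forall_integral_tendsto.mpr hconv
  have hliminfA : μ A ≤ atTop.liminf fun k => μs k A :=
    ProbabilityMeasure.le_liminf_measure_open_of_tendsto hP EMetric.isOpen_ball
  have hliminfB : μ B ≤ atTop.liminf fun k => μs k B :=
    ProbabilityMeasure.le_liminf_measure_open_of_tendsto hP EMetric.isOpen_ball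
  have hevA : ∀ᶠ k in atTop, cA < μs k A :=
    eventually_lt_of_lt_liminf (lt_of_lt_of_le (ENNReal.half_lt_self hμA.ne' hμAt) hliminfA)
  have hevB : ∀ᶠ k in atTop, cB < μs k B :=
    eventually_lt_of_lt_liminf (lt_of_lt_of_le (ENNReal.half_lt_self hμB.ne' hμBt) hliminfB)
  -- the lower bound function tends to ⊤
  have h0t : (0 : ℝ) < t.toReal := by
    have := ENNReal.toReal_lt_toReal (by norm_num) htne |>.mpr ht1
    simpa using lt_trans one_pos this
  have h1t : (1 : ℝ) < t.toReal := by
    have := ENNReal.toReal_lt_toReal (by norm_num) htne |>.mpr ht1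
    simpa using this
  have hpow : Tendsto (fun k => t ^ (a k)) atTop (𝓝 ⊤) := by
    have h1 : Tendsto (fun k => a k * Real.log t.toReal) atTop atTop :=
      hatop.atTop_mul_const (Real.log_pos h1t)
    have h2 : Tendsto (fun k => t.toReal ^ (a k)) atTop atTop := by
      have := Real.tendsto_exp_atTop.comp h1
      refine this.congr fun k => ?_
      rw [Function.comp_apply, Real.rpow_def_of_pos h0t, mul_comm]
    have h3 : Tendsto (fun k => ENNReal.ofReal (t.toReal ^ (a k))) atTop (𝓝 ⊤) :=
      ENNReal.tendsto_ofReal_atTop.comp h2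
    refine h3.congr fun k => ?_
    rw [← ENNReal.ofReal_rpow_of_pos h0t, ENNReal.ofReal_toReal htne]
  have hg : Tendsto (fun k => t ^ (a k) * (cB * cA)) atTop (𝓝 ⊤) := by
    have := ENNReal.Tendsto.mul_const hpow (Or.inl (by simp : (⊤ : ℝ≥0∞) ≠ 0)) (b := cB * cA)
    rwa [ENNReal.top_mul (mul_ne_zero hcB0 hcA0)] at this
  -- conclude by comparison
  refine tendsto_nhds_top_mono hg ?_
  filter_upwards [hevA, hevB] with k hkA hkB
  -- lower bound for the energy
  have hmB : MeasurableSet B := EMetric.isOpen_ball.measurableSet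
  have hmA : MeasurableSet A := EMetric.isOpen_ball.measurableSet
  have inner_bound : ∀ u ∈ A,
      t ^ (a k) * cB ≤ ∫⁻ v, (edist u v ^ (a k) + edist u v ^ (-lam)) ∂(μs k) := by
    intro u hu
    calc t ^ (a k) * cB ≤ t ^ (a k) * μs k B := by exact mul_le_mul_right hkB.le _
      _ = ∫⁻ v in B, t ^ (a k) ∂(μs k) := by rw [setLIntegral_const]
      _ ≤ ∫⁻ v in B, (edist u v ^ (a k) + edist u v ^ (-lam)) ∂(μs k) := by
          refine setLIntegral_mono' hmB fun v hv => ?_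
          exact le_trans (ENNReal.rpow_le_rpow (hsep u hu v hv) (ha k).le) le_self_add
      _ ≤ ∫⁻ v, (edist u v ^ (a k) + edist u v ^ (-lam)) ∂(μs k) :=
          setLIntegral_le_lintegral _ _
  calc t ^ (a k) * (cB * cA) = (t ^ (a k) * cB) * cA := by ring
    _ ≤ (t ^ (a k) * cB) * μs k A := by exact mul_le_mul_right hkA.le _
    _ = ∫⁻ u in A, t ^ (a k) * cB ∂(μs k) := by rw [setLIntegral_const]
    _ ≤ ∫⁻ u in A, (∫⁻ v, (edist u v ^ (a k) + edist u v ^ (-lam)) ∂(μs k)) ∂(μs k) :=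
        setLIntegral_mono' hmA inner_bound
    _ ≤ energy n (a k) lam (μs k) := setLIntegral_le_lintegral _ _
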